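/- Let R, S, T be rectangles in ℝ^n of the same type such that R and T are (4n−2)ε-significant and α(R) ≤ α(T). If there are nonzero morphisms χ: 𝕀^R → 𝕀^S(ε) and ψ: 𝕀^S → 𝕀^T(ε), then ψ(ε) ∘ χ: 𝕀^R → 𝕀^T(2ε) is nonzero. -/

import Mathlib

open CategoryTheory Classical

noncomputable section

/-- Convexity of a subset of a poset. -/
def IsConvex {P : Type} [Preorder P] (I : Set P) : Prop :=
  ∀ ⦃p q r : P⦄, p ∈ I → q ∈ I → p ≤ r → r ≤ q → r ∈ I

/-- Zigzag connectivity within a subset. -/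
def ZigzagConnected {P : Type} [Preorder P] (I : Set P) : Prop :=
  ∀ p ∈ I, ∀ q ∈ I,
    Relation.ReflTransGen (fun a b => a ∈ I ∧ b ∈ I ∧ (a ≤ b ∨ b ≤ a)) p q

/-- An interval in a poset: nonempty, convex, and zigzag connected. -/
def IsIntervalSet {P : Type} [Preorder P] (I : Set P) : Prop :=
  I.Nonempty ∧ IsConvex I ∧ ZigzagConnected I

open scoped Classical in
/-- The pointwise vector space of the interval module: `k` (as `⊤`) on `I`, `0` off `I`. -/
def objSub (k : Type) [Field k] {P : Type} [Preorder P] (I : Set P) (p : P) : Submodule k k :=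
  if p ∈ I then ⊤ else ⊥

open scoped Classical in
/-- The interval persistence module `𝕀^I` as a functor `P ⥤ ModuleCat k`. -/
def intervalModule (k : Type) [Field k] {P : Type} [Preorder P] (I : Set P)
    (hI : IsConvex I) : P ⥤ ModuleCat.{0} k where
  obj p := ModuleCat.of k (objSub k I p)
  map {p q} h :=
    if hpq : p ∈ I ∧ q ∈ I then
      ModuleCat.ofHom
        { toFun := fun x => ⟨(x : k), by simp [objSub, hpq.2]⟩
          map_add' := by intros; rfl
          map_smul' := by intros; rfl }
    else 0
  map_id := by
    intro p
    try dsimp only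
    by_cases hp : p ∈ I
    · rw [dif_pos ⟨hp, hp⟩]; rfl
    · rw [dif_neg (fun h => hp h.1)]
      haveI : Subsingleton ↥(objSub k I p) := by
        rw [objSub, if_neg hp]; infer_instance
      apply ModuleCat.hom_ext; apply LinearMap.ext; intro x
      exact this.allEq _ _
  map_comp := by
    intro p q r hpq hqr
    try dsimp only
    by_cases hpr : p ∈ I ∧ r ∈ I
    · have hq : q ∈ I := hI hpr.1 hpr.2 (leOfHom hpq) (leOfHom hqr)
      rw [dif_pos hpr, dif_pos ⟨hpr.1, hq⟩, dif_pos ⟨hq, hpr.2⟩]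
      rfl
    · rw [dif_neg hpr]
      by_cases hp : p ∈ I
      · have hr : r ∉ I := fun hr => hpr ⟨hp, hr⟩
        haveI : Subsingleton ↥(objSub k I r) := by
          rw [objSub, if_neg hr]; infer_instance
        apply ModuleCat.hom_ext; apply LinearMap.ext; intro x
        exact this.allEq _ _
      · haveI : Subsingleton ↥(objSub k I p) := by
          rw [objSub, if_neg hp]; infer_instance
        apply ModuleCat.hom_ext; apply LinearMap.ext; intro x
        have hx : x = 0 := this.allEq x 0
        rw [hx]
        simp

open DirectSum

open scoped ENNReal

/-- Direct sum of a family of persistence modules. -/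
def dsumF (k : Type) [Field k] {P : Type} [Preorder P] {ι : Type}
    (F : ι → P ⥤ ModuleCat.{0} k) : P ⥤ ModuleCat.{0} k where
  obj p := ModuleCat.of k (⨁ i, ((F i).obj p : Type))
  map {p q} h := ModuleCat.ofHom
    (DFinsupp.mapRange.linearMap (fun i => (((F i).map h).hom : (F i).obj p →ₗ[k] (F i).obj q)))
  map_id := by
    intro p
    try dsimp only
    simp only [CategoryTheory.Functor.map_id, ModuleCat.hom_id]
    apply ModuleCat.hom_ext
    exact DFinsupp.mapRange.linearMap_id
  map_comp := by
    intro p q r hpq hqr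
    try dsimp only
    simp only [CategoryTheory.Functor.map_comp]
    apply ModuleCat.hom_ext; apply LinearMap.ext; intro x
    apply DFinsupp.ext; intro i
    rfl

/-- Use the preorder category structure on `Fin n → ℝ`. -/
instance RnCat (n : ℕ) : Category (Fin n → ℝ) := Preorder.smallCategory _

/-- Diagonal translation by `ε` as an endofunctor of the poset `Fin n → ℝ`. -/
def transl (n : ℕ) (ε : ℝ) : (Fin n → ℝ) ⥤ (Fin n → ℝ) :=
  Monotone.functor (f := fun p i => p i + ε)
    (fun _ _ hab i => add_le_add_left (hab i) ε)

/-- `M` and `N` are `ε`-interleaved `ℝⁿ`-persistence modules. -/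
def Interleaved (k : Type) [Field k] {n : ℕ} (ε : ℝ)
    (M N : (Fin n → ℝ) ⥤ ModuleCat.{0} k) : Prop :=
  ∃ _hε : 0 ≤ ε, ∃ (f : M ⟶ transl n ε ⋙ N) (g : N ⟶ transl n ε ⋙ M),
    (∀ p : Fin n → ℝ, f.app p ≫ g.app (fun i => p i + ε) =
      M.map (homOfLE (show p ≤ fun i => p i + ε + ε from
        fun i => by show p i ≤ p i + ε + ε; linarith))) ∧
    (∀ p : Fin n → ℝ, g.app p ≫ f.app (fun i => p i + ε) =
      N.map (homOfLE (show p ≤ fun i => p i + ε + ε from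
        fun i => by show p i ≤ p i + ε + ε; linarith)))

/-- An interval `I ⊆ ℝⁿ` is `δ`-trivial: it contains no pair `p ≤ p + δ`. -/
def SetTrivial {n : ℕ} (δ : ℝ) (I : Set (Fin n → ℝ)) : Prop :=
  ¬ ∃ p, p ∈ I ∧ (fun i => p i + δ) ∈ I

/-- Barcode data: an indexed family of nonempty convex intervals in `ℝⁿ`. -/
structure Barcode (n : ℕ) where
  ι : Type
  I : ι → Set (Fin n → ℝ)
  nonempty : ∀ i, (I i).Nonempty
  conv : ∀ i, IsConvex (I i)

/-- The interval decomposable module associated to barcode data. -/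
def Barcode.module (k : Type) [Field k] {n : ℕ} (B : Barcode n) :
    (Fin n → ℝ) ⥤ ModuleCat.{0} k :=
  dsumF k fun i => intervalModule k (B.I i) (B.conv i)

/-- `B` is pointwise finite dimensional. -/
def Barcode.pfd (k : Type) [Field k] {n : ℕ} (B : Barcode n) : Prop :=
  ∀ p : Fin n → ℝ, Module.Finite k ((B.module k).obj p)

/-- An `ε`-matching between two barcodes: a partial bijection such that unmatched
intervals are `2ε`-trivial and matched intervals are `ε`-interleaved. -/
def Matched (k : Type) [Field k] {n : ℕ} (ε : ℝ) (B C : Barcode n) : Prop :=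
  0 ≤ ε ∧ ∃ (A : Set B.ι) (A' : Set C.ι) (e : A ≃ A'),
    (∀ i ∉ A, SetTrivial (2 * ε) (B.I i)) ∧
    (∀ j ∉ A', SetTrivial (2 * ε) (C.I j)) ∧
    (∀ i : A, Interleaved k ε
      (intervalModule k (B.I i) (B.conv i))
      (intervalModule k (C.I (e i)) (C.conv (e i))))

/-- The interleaving distance, valued in `ℝ≥0∞`. -/
def dInt (k : Type) [Field k] {n : ℕ} (M N : (Fin n → ℝ) ⥤ ModuleCat.{0} k) : ℝ≥0∞ :=
  ⨅ (ε : ℝ) (_ : Interleaved k ε M N), ENNReal.ofReal ε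

/-- The bottleneck distance between barcodes, valued in `ℝ≥0∞`. -/
def dBot (k : Type) [Field k] {n : ℕ} (B C : Barcode n) : ℝ≥0∞ :=
  ⨅ (ε : ℝ) (_ : Matched k ε B C), ENNReal.ofReal ε

/-- Rectangles: products of real intervals. -/
def rectSet {n : ℕ} (R : Fin n → Set ℝ) : Set (Fin n → ℝ) := {x | ∀ i, x i ∈ R i}

theorem rectSet_convex {n : ℕ} (R : Fin n → Set ℝ) (h : ∀ i, (R i).OrdConnected) :
    IsConvex (rectSet R) := by
  intro p q r hp hq hpr hrq i
  exact (h i).out (hp i) (hq i) ⟨hpr i, hrq i⟩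

/-- A barcode consists of rectangles. -/
def IsRectBarcode {n : ℕ} (B : Barcode n) : Prop :=
  ∀ i, ∃ R : Fin n → Set ℝ,
    (∀ j, (R j).Nonempty ∧ (R j).OrdConnected) ∧ B.I i = rectSet R

/-- Decorated numbers: an extended real endpoint with a decoration,
`false` = `−` (closed side), `true` = `+` (open side), ordered lexicographically
so that `a⁻ < a⁺` and `a^* < b^*` whenever `a < b`. -/
def DecNum := Lex (EReal × Bool)

noncomputable instance : LinearOrder DecNum :=
  inferInstanceAs (LinearOrder (Lex (EReal × Bool)))

open scoped Classical in
/-- The decorated lower endpoint of a subset of `ℝ`. -/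
noncomputable def lowDec (I : Set ℝ) : DecNum :=
  toLex (sInf ((↑) '' I : Set EReal),
    if sInf ((↑) '' I : Set EReal) ∈ ((↑) '' I : Set EReal) then false else true)

open scoped Classical in
/-- The decorated upper endpoint of a subset of `ℝ`. -/
noncomputable def highDec (I : Set ℝ) : DecNum :=
  toLex (sSup ((↑) '' I : Set EReal),
    if sSup ((↑) '' I : Set EReal) ∈ ((↑) '' I : Set EReal) then true else false)

/-- The decorated point `min_R` of a rectangle with factors `R`. -/
noncomputable def minDec {n : ℕ} (R : Fin n → Set ℝ) : Fin n → DecNum :=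
  fun i => lowDec (R i)

/-- The decorated point `max_R` of a rectangle with factors `R`. -/
noncomputable def maxDec {n : ℕ} (R : Fin n → Set ℝ) : Fin n → DecNum :=
  fun i => highDec (R i)

/-- `u` of a decorated number: the underlying real number, `0` for `±∞`. -/
noncomputable def uDec (d : DecNum) : ℝ := (ofLex d).1.toReal

/-- `α` of a rectangle with factors `R`. -/
noncomputable def alphaR {n : ℕ} (R : Fin n → Set ℝ) : ℝ :=
  (∑ i, uDec (minDec R i)) + (∑ i, uDec (maxDec R i))

open scoped Classical in
/-- `P` of a rectangle: the number of endpoint decorations equal to `+`. -/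
noncomputable def PR {n : ℕ} (R : Fin n → Set ℝ) : ℕ :=
  (Finset.univ.filter fun i => (ofLex (minDec R i)).2 = true).card +
    (Finset.univ.filter fun i => (ofLex (maxDec R i)).2 = true).card

/-- The preorder `≤_α` on rectangles. -/
noncomputable def leAlpha {n : ℕ} (R S : Fin n → Set ℝ) : Prop :=
  alphaR R < alphaR S ∨ (alphaR R = alphaR S ∧ PR R ≤ PR S)

/-- Two rectangles are of the same type if all coordinatewise set differences
are bounded. -/
def SameType {n : ℕ} (R S : Fin n → Set ℝ) : Prop :=
  ∀ i, Bornology.IsBounded (R i \ S i) ∧ Bornology.IsBounded (S i \ R i)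

/-- `I ⊆ ℝⁿ` is `δ`-significant. -/
def SetSignificant {n : ℕ} (δ : ℝ) (I : Set (Fin n → ℝ)) : Prop :=
  ∃ p, p ∈ I ∧ (fun i => p i + δ) ∈ I

/-- Rectangle factor data: each factor is a nonempty ordered-connected real interval. -/
def IsRectFactors {n : ℕ} (R : Fin n → Set ℝ) : Prop :=
  ∀ i, (R i).Nonempty ∧ (R i).OrdConnected


namespace RectAux

variable {ε δ : ℝ} {A B C : Set ℝ}

lemma min_mem {A : Set ℝ} {x y : ℝ} (hx : x ∈ A) (hy : y ∈ A) : min x y ∈ A := by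
  rcases le_total x y with h | h
  · rwa [min_eq_left h]
  · rwa [min_eq_right h]

/-- Either a common point exists in coordinate, or the strict "F*" bound holds. -/
lemma point_or_fstar (hC : C.OrdConnected)
    {b : ℝ} (hbB : b ∈ B) (hbC : b + ε ∈ C)
    (c3' : ∀ x y : ℝ, x ≤ y → x ∈ B → y ∈ B → y + ε ∈ C → x + ε ∈ C) :
    (∃ x, x ∈ A ∧ x + ε ∈ B ∧ x + ε + ε ∈ C) ∨
    (∀ c ∈ C, ∀ x ∈ A, x + ε ∈ B → c < x + ε + ε) := by
  by_cases hpt : ∃ x, x ∈ A ∧ x + ε ∈ B ∧ x + ε + ε ∈ C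
  · exact Or.inl hpt
  · refine Or.inr fun c hc x hx hxB => ?_
    by_contra hlt
    push_neg at hlt
    have hmem : x + ε + ε ∈ C := by
      rcases le_total (b + ε) (x + ε + ε) with h | h
      · exact hC.out hbC hc ⟨h, hlt⟩
      · have : x + ε ≤ b := by linarith
        exact c3' (x + ε) b this hxB hbB hbC
    exact hpt ⟨x, hx, hxB, hmem⟩

/-- In a failure coordinate, A is bounded below and the strict α-inequality holds. -/
lemma fstar_bddBelow (hε : 0 ≤ ε)
    {a : ℝ} (haA : a ∈ A) (haB : a + ε ∈ B)
    (c3 : ∀ x y : ℝ, x ≤ y → x ∈ A → y ∈ A → y + ε ∈ B → x + ε ∈ B)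
    {b : ℝ} (hbC : b + ε ∈ C)
    (fstar : ∀ c ∈ C, ∀ x ∈ A, x + ε ∈ B → c < x + ε + ε) :
    BddBelow A := by
  by_contra hbb
  rw [not_bddBelow_iff] at hbb
  obtain ⟨y, hyA, hy⟩ := hbb (min a (b + ε - ε - ε) - 1)
  have hya : y ≤ a := by
    have := min_le_left a (b + ε - ε - ε); linarith
  have hyB : y + ε ∈ B := c3 y a hya hyA haA haB
  have := fstar (b + ε) hbC y hyA hyB
  have := min_le_right a (b + ε - ε - ε)
  linarith

lemma fstar_le_inf {a : ℝ} (haA : a ∈ A) (haB : a + ε ∈ B)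
    (c3 : ∀ x y : ℝ, x ≤ y → x ∈ A → y ∈ A → y + ε ∈ B → x + ε ∈ B)
    (fstar : ∀ c ∈ C, ∀ x ∈ A, x + ε ∈ B → c < x + ε + ε)
    {c : ℝ} (hc : c ∈ C) {x : ℝ} (hx : x ∈ A) : c - ε - ε < x := by
  have hm : min x a ∈ A := min_mem hx haA
  have hmB : min x a + ε ∈ B := c3 _ a (min_le_right x a) hm haA haB
  have := fstar c hc _ hm hmB
  have := min_le_left x a
  linarith

/-- The key strict inequality in a failure coordinate. All endpoints real. -/
lemma fstar_strict (hε : 0 ≤ ε) (hδ : 2 * ε ≤ δ)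
    (hAne : A.Nonempty) (hCne : C.Nonempty)
    (hAbb : BddBelow A) (hAba : BddAbove A) (hCbb : BddBelow C) (hCba : BddAbove C)
    {a : ℝ} (haA : a ∈ A) (haB : a + ε ∈ B)
    (c3 : ∀ x y : ℝ, x ≤ y → x ∈ A → y ∈ A → y + ε ∈ B → x + ε ∈ B)
    (fstar : ∀ c ∈ C, ∀ x ∈ A, x + ε ∈ B → c < x + ε + ε)
    (sigA : ∃ r, r ∈ A ∧ r + δ ∈ A) (sigC : ∃ t, t ∈ C ∧ t + δ ∈ C) :
    sInf C + sSup C < sInf A + sSup A + 4 * ε - 2 * δ := by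
  obtain ⟨r, hr, hr'⟩ := sigA
  obtain ⟨t, ht, ht'⟩ := sigC
  set rl := sInf A; set rh := sSup A; set tl := sInf C; set th := sSup C
  have h1 : th ≤ rl + 2 * ε := by
    apply csSup_le hCne
    intro c hc
    have : c - ε - ε ≤ rl := le_csInf hAne fun x hx => le_of_lt (fstar_le_inf haA haB c3 fstar hc hx)
    linarith
  have h2 : tl + δ ≤ th := by
    have l1 : tl ≤ t := csInf_le hCbb ht
    have l2 : t + δ ≤ th := le_csSup hCba ht'
    linarith
  have h3 : rl + δ ≤ rh := by
    have l1 : rl ≤ r := csInf_le hAbb hr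
    have l2 : r + δ ≤ rh := le_csSup hAba hr'
    linarith
  by_contra hge
  push_neg at hge
  have e1 : th = rl + 2 * ε := by linarith
  have e2 : rh = rl + δ := by linarith
  have e3 : tl = th - δ := by linarith
  -- significance witness for C is pinned
  have htl : t = tl := by
    have l1 : tl ≤ t := csInf_le hCbb ht
    have l2 : t + δ ≤ th := le_csSup hCba ht'
    linarith
  have hthC : th ∈ C := by
    have : t + δ = th := by rw [htl]; linarith
    rwa [← this]
  -- significance witness for A is pinned
  have hrl : r = rl := by
    have l1 : rl ≤ r := csInf_le hAbb hr
    have l2 : r + δ ≤ rh := le_csSup hAba hr'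
    linarith
  have hrlA : rl ∈ A := hrl ▸ hr
  have hrla : rl ≤ a := csInf_le hAbb haA
  have hrlB : rl + ε ∈ B := c3 rl a hrla hrlA haA haB
  have := fstar th hthC rl hrlA hrlB
  linarith

/-- Non-failure coordinate bounds: `sInf B ≤ sInf A + ε` (when both bounded below). -/
lemma inf_le_inf (hAne : A.Nonempty) (hBbb : BddBelow B)
    {a : ℝ} (haA : a ∈ A) (haB : a + ε ∈ B)
    (c3 : ∀ x y : ℝ, x ≤ y → x ∈ A → y ∈ A → y + ε ∈ B → x + ε ∈ B) :
    sInf B ≤ sInf A + ε := by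
  have : ∀ x ∈ A, sInf B - ε ≤ x := by
    intro x hx
    have hm : min x a ∈ A := min_mem hx haA
    have hmB : min x a + ε ∈ B := c3 _ a (min_le_right x a) hm haA haB
    have := csInf_le hBbb hmB
    have := min_le_left x a
    linarith
  have := le_csInf hAne this
  linarith

/-- `sSup B ≤ sSup A + ε`. -/
lemma sup_le_sup (hBne : B.Nonempty) (hAba : BddAbove A)
    {a : ℝ} (haA : a ∈ A) (haB : a + ε ∈ B)
    (c2 : ∀ x y : ℝ, x ≤ y → x ∈ A → x + ε ∈ B → y + ε ∈ B → y ∈ A) :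
    sSup B ≤ sSup A + ε := by
  apply csSup_le hBne
  intro s hs
  rcases le_total s (a + ε) with h | h
  · have := le_csSup hAba haA; linarith
  · have hsA : s - ε ∈ A := by
      have := c2 a (s - ε) (by linarith) haA haB (by simpa using hs)
      simpa using this
    have := le_csSup hAba hsA
    linarith

end RectAux

namespace RectAux

lemma sInf_image_of_bddBelow {A : Set ℝ} (hne : A.Nonempty) (h : BddBelow A) :
    sInf ((↑) '' A : Set EReal) = ((sInf A : ℝ) : EReal) := by
  refine IsGLB.sInf_eq ⟨?_, ?_⟩
  · rintro x ⟨y, hy, rfl⟩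
    exact_mod_cast csInf_le h hy
  · rintro b hb
    induction b with
    | bot => exact bot_le
    | coe b =>
      have : ∀ y ∈ A, b ≤ y := fun y hy => by exact_mod_cast hb ⟨y, hy, rfl⟩
      exact_mod_cast le_csInf hne this
    | top =>
      obtain ⟨y, hy⟩ := hne
      have := hb ⟨y, hy, rfl⟩
      simp at this
lemma sInf_image_of_not_bddBelow {A : Set ℝ} (h : ¬BddBelow A) :
    sInf ((↑) '' A : Set EReal) = ⊥ := by
  rw [not_bddBelow_iff] at h
  rw [sInf_eq_bot]
  intro b hb
  induction b with
  | bot => exact absurd hb (lt_irrefl _)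
  | coe b =>
    obtain ⟨y, hy, hlt⟩ := h b
    exact ⟨y, ⟨y, hy, rfl⟩, by exact_mod_cast hlt⟩
  | top =>
    obtain ⟨y, hy, hlt⟩ := h 0
    exact ⟨y, ⟨y, hy, rfl⟩, by simp⟩

lemma sSup_image_of_bddAbove {A : Set ℝ} (hne : A.Nonempty) (h : BddAbove A) :
    sSup ((↑) '' A : Set EReal) = ((sSup A : ℝ) : EReal) := by
  refine IsLUB.sSup_eq ⟨?_, ?_⟩
  · rintro x ⟨y, hy, rfl⟩
    exact_mod_cast le_csSup h hy
  · rintro b hb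
    induction b with
    | top => exact le_top
    | coe b =>
      have : ∀ y ∈ A, y ≤ b := fun y hy => by exact_mod_cast hb ⟨y, hy, rfl⟩
      exact_mod_cast csSup_le hne this
    | bot =>
      obtain ⟨y, hy⟩ := hne
      have := hb ⟨y, hy, rfl⟩
      simp at this

lemma sSup_image_of_not_bddAbove {A : Set ℝ} (h : ¬BddAbove A) :
    sSup ((↑) '' A : Set EReal) = ⊤ := by
  rw [not_bddAbove_iff] at h
  rw [sSup_eq_top]
  intro b hb
  induction b with
  | top => exact absurd hb (lt_irrefl _)
  | coe b =>
    obtain ⟨y, hy, hlt⟩ := h b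
    exact ⟨y, ⟨y, hy, rfl⟩, by exact_mod_cast hlt⟩
  | bot =>
    obtain ⟨y, hy, hlt⟩ := h 0
    exact ⟨y, ⟨y, hy, rfl⟩, by simp⟩

lemma bddBelow_iff_sameType {A C : Set ℝ}
    (h1 : Bornology.IsBounded (A \ C)) (h2 : Bornology.IsBounded (C \ A)) :
    BddBelow A ↔ BddBelow C := by
  constructor
  · intro hA
    have : C ⊆ (C \ A) ∪ A := fun x hx => by
      by_cases h : x ∈ A
      · exact Or.inr h
      · exact Or.inl ⟨hx, h⟩
    exact (h2.bddBelow.union hA).mono this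
  · intro hC
    have : A ⊆ (A \ C) ∪ C := fun x hx => by
      by_cases h : x ∈ C
      · exact Or.inr h
      · exact Or.inl ⟨hx, h⟩
    exact (h1.bddBelow.union hC).mono this

lemma bddAbove_iff_sameType {A C : Set ℝ}
    (h1 : Bornology.IsBounded (A \ C)) (h2 : Bornology.IsBounded (C \ A)) :
    BddAbove A ↔ BddAbove C := by
  constructor
  · intro hA
    have : C ⊆ (C \ A) ∪ A := fun x hx => by
      by_cases h : x ∈ A
      · exact Or.inr h
      · exact Or.inl ⟨hx, h⟩
    exact (h2.bddAbove.union hA).mono this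
  · intro hC
    have : A ⊆ (A \ C) ∪ C := fun x hx => by
      by_cases h : x ∈ C
      · exact Or.inr h
      · exact Or.inl ⟨hx, h⟩
    exact (h1.bddAbove.union hC).mono this

end RectAux
namespace RectAux

open CategoryTheory

variable {k : Type} [Field k] {n : ℕ} {ε : ℝ}
  {I J : Set (Fin n → ℝ)} {hI : IsConvex I} {hJ : IsConvex J}

lemma one_mem {p : Fin n → ℝ} (hp : p ∈ I) : (1 : k) ∈ objSub k I p := by
  simp [objSub, hp]

/-- The generator of the stalk at `p ∈ I`. -/
def oneEl (hp : p ∈ I) : (intervalModule k I hI).obj p := ⟨1, one_mem hp⟩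

/-- Value of a stalk element as an element of `k`. -/
def ev {P : Submodule k k} (x : P) : k := x.1

lemma ev_eq_zero_of_not_mem {p : Fin n → ℝ} (hp : p ∉ I)
    (x : objSub k I p) : ev x = 0 := by
  have := x.2
  unfold objSub at this
  simp only [hp, if_false, Submodule.mem_bot] at this
  exact this

lemma eq_of_ev {P : Submodule k k} (x y : P)
    (h : ev x = ev y) : x = y := Subtype.ext h

lemma ev_oneEl {p : Fin n → ℝ} (hp : p ∈ I) : ev (oneEl (hI := hI) (k := k) hp) = 1 := rfl

lemma im_map_ev {p q : Fin n → ℝ} (h : p ⟶ q) (x : (intervalModule k I hI).obj p) :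
    ev ((intervalModule k I hI).map h x) = if p ∈ I ∧ q ∈ I then ev x else 0 := by
  by_cases hpq : p ∈ I ∧ q ∈ I
  · rw [if_pos hpq]
    show ev ((intervalModule k I hI).map h x) = _
    unfold intervalModule
    dsimp only
    rw [dif_pos hpq]
    rfl
  · rw [if_neg hpq]
    show ev ((intervalModule k I hI).map h x) = _
    unfold intervalModule
    dsimp only
    rw [dif_neg hpq]
    rfl

end RectAux

namespace RectAux

open CategoryTheory

variable {k : Type} [Field k] {n : ℕ} {ε : ℝ}
  {I J : Set (Fin n → ℝ)} {hI : IsConvex I} {hJ : IsConvex J}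

/-- The scalar of `χ` at a point `p ∈ I`. -/
def scalAt (χ : intervalModule k I hI ⟶ transl n ε ⋙ intervalModule k J hJ)
    {p : Fin n → ℝ} (hp : p ∈ I) : k :=
  ev (χ.app p (oneEl hp))

lemma ev_smul {P : Submodule k k} (c : k) (x : P) :
    ev (c • x) = c * ev x := rfl

lemma smul_oneEl {p : Fin n → ℝ} (hp : p ∈ I) (x : (intervalModule k I hI).obj p) :
    x = ev x • oneEl hp := by
  apply eq_of_ev
  exact (mul_one _).symm

lemma app_ev (χ : intervalModule k I hI ⟶ transl n ε ⋙ intervalModule k J hJ)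
    {p : Fin n → ℝ} (hp : p ∈ I) (x : (intervalModule k I hI).obj p) :
    ev (χ.app p x) = ev x * scalAt χ hp := by
  conv_lhs => rw [smul_oneEl hp x]
  rw [map_smul]
  exact ev_smul _ _

lemma app_eq_zero_of_scal (χ : intervalModule k I hI ⟶ transl n ε ⋙ intervalModule k J hJ)
    {p : Fin n → ℝ} (hp : p ∈ I) (h : scalAt χ hp = 0) : χ.app p = 0 := by
  apply ModuleCat.hom_ext; apply LinearMap.ext
  intro x
  apply eq_of_ev
  rw [app_ev χ hp x, h, mul_zero]
  rfl

lemma scal_ne_of_app (χ : intervalModule k I hI ⟶ transl n ε ⋙ intervalModule k J hJ)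
    {p : Fin n → ℝ} (hp : p ∈ I) (h : χ.app p ≠ 0) : scalAt χ hp ≠ 0 :=
  fun hs => h (app_eq_zero_of_scal χ hp hs)

lemma scal_eq_zero_of_not_mem (χ : intervalModule k I hI ⟶ transl n ε ⋙ intervalModule k J hJ)
    {p : Fin n → ℝ} (hp : p ∈ I) (hpJ : (fun i => p i + ε) ∉ J) : scalAt χ hp = 0 :=
  ev_eq_zero_of_not_mem hpJ _

/-- Naturality, in scalar form. -/
lemma nat_ev (χ : intervalModule k I hI ⟶ transl n ε ⋙ intervalModule k J hJ)
    {p q : Fin n → ℝ} (hle : p ≤ q) (x : (intervalModule k I hI).obj p) :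
    ev (χ.app q ((intervalModule k I hI).map (homOfLE hle) x)) =
      ev ((intervalModule k J hJ).map
        (homOfLE (show (fun i => p i + ε) ≤ (fun i => q i + ε) from
          fun i => add_le_add_left (hle i) ε)) (χ.app p x)) := by
  have h := χ.naturality (homOfLE hle)
  have h2 := LinearMap.congr_fun (congrArg ModuleCat.Hom.hom h) x
  have e1 : ((intervalModule k I hI).map (homOfLE hle) ≫ χ.app q) x =
      χ.app q ((intervalModule k I hI).map (homOfLE hle) x) := rfl
  have e2 : (transl n ε ⋙ intervalModule k J hJ).map (homOfLE hle) =
      (intervalModule k J hJ).map (homOfLE (show (fun i => p i + ε) ≤ (fun i => q i + ε) from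
          fun i => add_le_add_left (hle i) ε)) := rfl
  rw [e2] at h2
  exact congrArg ev h2

lemma scal_eq_of_le (χ : intervalModule k I hI ⟶ transl n ε ⋙ intervalModule k J hJ)
    {p q : Fin n → ℝ} (hle : p ≤ q) (hp : p ∈ I) (hq : q ∈ I)
    (hpJ : (fun i => p i + ε) ∈ J) (hqJ : (fun i => q i + ε) ∈ J) :
    scalAt χ hp = scalAt χ hq := by
  have h := nat_ev χ hle (oneEl hp)
  have e1 : (intervalModule k I hI).map (homOfLE hle) (oneEl hp) = oneEl hq := by
    apply eq_of_ev
    rw [im_map_ev, if_pos ⟨hp, hq⟩, ev_oneEl, ev_oneEl]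
  rw [e1] at h
  erw [im_map_ev, if_pos ⟨hpJ, hqJ⟩] at h
  exact h.symm

/-- Forbidden configuration: target set survives above a point where the source dies. -/
lemma not_escape_up (χ : intervalModule k I hI ⟶ transl n ε ⋙ intervalModule k J hJ)
    {p q : Fin n → ℝ} (hle : p ≤ q) (hp : p ∈ I) (hq : q ∉ I)
    (hpJ : (fun i => p i + ε) ∈ J) (hqJ : (fun i => q i + ε) ∈ J)
    (hs : scalAt χ hp ≠ 0) : False := by
  have h := nat_ev χ hle (oneEl hp)
  have e0 : (intervalModule k I hI).map (homOfLE hle) (oneEl hp) = 0 := by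
    apply eq_of_ev
    rw [im_map_ev, if_neg (fun hc => hq hc.2)]
    rfl
  rw [e0, map_zero] at h
  erw [im_map_ev, if_pos ⟨hpJ, hqJ⟩] at h
  exact hs (h.symm.trans rfl)

/-- Forbidden configuration: target dies below a point where both survive. -/
lemma not_escape_down (χ : intervalModule k I hI ⟶ transl n ε ⋙ intervalModule k J hJ)
    {p q : Fin n → ℝ} (hle : p ≤ q) (hp : p ∈ I) (hq : q ∈ I)
    (hpJ : (fun i => p i + ε) ∉ J) (hqJ : (fun i => q i + ε) ∈ J)
    (hs : scalAt χ hq ≠ 0) : False := by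
  have h := nat_ev χ hle (oneEl hp)
  have e1 : (intervalModule k I hI).map (homOfLE hle) (oneEl hp) = oneEl hq := by
    apply eq_of_ev
    rw [im_map_ev, if_pos ⟨hp, hq⟩, ev_oneEl, ev_oneEl]
  rw [e1] at h
  erw [im_map_ev, if_neg (fun hc => hpJ hc.1)] at h
  exact hs h

/-- A nonzero morphism admits a witness point. -/
lemma exists_witness (χ : intervalModule k I hI ⟶ transl n ε ⋙ intervalModule k J hJ)
    (hχ : χ ≠ 0) :
    ∃ p, ∃ hp : p ∈ I, (fun i => p i + ε) ∈ J ∧ scalAt χ hp ≠ 0 := by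
  by_contra h
  push_neg at h
  apply hχ
  apply NatTrans.ext
  funext p
  by_cases hp : p ∈ I
  · by_cases hpJ : (fun i => p i + ε) ∈ J
    · by_cases hs : scalAt χ hp = 0
      · rw [app_eq_zero_of_scal χ hp hs]; rfl
      · exact absurd (h p hp hpJ) hs
    · rw [app_eq_zero_of_scal χ hp (scal_eq_zero_of_not_mem χ hp hpJ)]; rfl
  · show χ.app p = _
    apply ModuleCat.hom_ext; apply LinearMap.ext
    intro x
    have hx : x = 0 := by
      apply eq_of_ev
      exact ev_eq_zero_of_not_mem hp x
    rw [hx, map_zero]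
    rfl

end RectAux

namespace RectAux

open CategoryTheory

variable {k : Type} [Field k] {n : ℕ} {ε : ℝ}

lemma min_mem' {A : Set ℝ} {x y : ℝ} (hx : x ∈ A) (hy : y ∈ A) : min x y ∈ A := by
  rcases le_total x y with h | h
  · rwa [min_eq_left h]
  · rwa [min_eq_right h]

lemma min_point_mem {R : Fin n → Set ℝ} {p q : Fin n → ℝ}
    (hp : p ∈ rectSet R) (hq : q ∈ rectSet R) :
    (fun j => min (p j) (q j)) ∈ rectSet R :=
  fun j => min_mem' (hp j) (hq j)

lemma min_point_shift_mem {S : Fin n → Set ℝ} {p q : Fin n → ℝ}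
    (hp : (fun i => p i + ε) ∈ rectSet S) (hq : (fun i => q i + ε) ∈ rectSet S) :
    (fun i => (fun j => min (p j) (q j)) i + ε) ∈ rectSet S := by
  intro j
  show min (p j) (q j) + ε ∈ S j
  rw [← min_add_add_right]
  exact min_mem' (hp j) (hq j)

lemma update_mem_rect {R : Fin n → Set ℝ} {a : Fin n → ℝ} (ha : a ∈ rectSet R)
    {i : Fin n} {x : ℝ} (hx : x ∈ R i) : Function.update a i x ∈ rectSet R := by
  intro j
  by_cases h : j = i
  · subst h; simpa using hx
  · rw [Function.update_of_ne h]; exact ha j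

lemma update_shift_mem {S : Fin n → Set ℝ} {a : Fin n → ℝ}
    (ha : (fun i => a i + ε) ∈ rectSet S)
    {i : Fin n} {x : ℝ} (hx : x + ε ∈ S i) :
    (fun j => Function.update a i x j + ε) ∈ rectSet S := by
  intro j
  by_cases h : j = i
  · subst h; simpa using hx
  · show Function.update a i x j + ε ∈ S j
    rw [Function.update_of_ne h]; exact ha j

lemma update_le_update {a : Fin n → ℝ} {i : Fin n} {x y : ℝ} (h : x ≤ y) :
    Function.update a i x ≤ Function.update a i y := by
  intro j
  by_cases hj : j = i
  · subst hj; simpa using h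
  · rw [Function.update_of_ne hj, Function.update_of_ne hj]

lemma le_update {a : Fin n → ℝ} {i : Fin n} {x : ℝ} (h : a i ≤ x) :
    a ≤ Function.update a i x := by
  intro j
  by_cases hj : j = i
  · subst hj; simpa using h
  · rw [Function.update_of_ne hj]

lemma update_le {a : Fin n → ℝ} {i : Fin n} {x : ℝ} (h : x ≤ a i) :
    Function.update a i x ≤ a := by
  intro j
  by_cases hj : j = i
  · subst hj; simpa using h
  · rw [Function.update_of_ne hj]

variable {R S : Fin n → Set ℝ} {hIc : IsConvex (rectSet R)} {hJc : IsConvex (rectSet S)}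

/-- Transport nonvanishing of the scalar to any point of the support rectangle. -/
lemma scal_at_point (χ : intervalModule k (rectSet R) hIc ⟶
      transl n ε ⋙ intervalModule k (rectSet S) hJc)
    {a p : Fin n → ℝ} (ha : a ∈ rectSet R) (haS : (fun i => a i + ε) ∈ rectSet S)
    (hp : p ∈ rectSet R) (hpS : (fun i => p i + ε) ∈ rectSet S)
    (hsa : scalAt χ ha ≠ 0) : scalAt χ hp ≠ 0 := by
  have hm : (fun j => min (p j) (a j)) ∈ rectSet R := min_point_mem hp ha
  have hmS : (fun i => (fun j => min (p j) (a j)) i + ε) ∈ rectSet S :=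
    min_point_shift_mem hpS haS
  have e1 := scal_eq_of_le χ (fun j => min_le_right (p j) (a j)) hm ha hmS haS
  have e2 := scal_eq_of_le χ (fun j => min_le_left (p j) (a j)) hm hp hmS hpS
  rw [← e2, e1]
  exact hsa

lemma cond2_of_witness (χ : intervalModule k (rectSet R) hIc ⟶
      transl n ε ⋙ intervalModule k (rectSet S) hJc)
    {a : Fin n → ℝ} (ha : a ∈ rectSet R) (haS : (fun i => a i + ε) ∈ rectSet S)
    (hsa : scalAt χ ha ≠ 0) (i : Fin n) :
    ∀ x y : ℝ, x ≤ y → x ∈ R i → x + ε ∈ S i → y + ε ∈ S i → y ∈ R i := by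
  intro x y hxy hxR hxS hyS
  by_contra hyR
  have hp : Function.update a i x ∈ rectSet R := update_mem_rect ha hxR
  have hpS : (fun j => Function.update a i x j + ε) ∈ rectSet S := update_shift_mem haS hxS
  have hqS : (fun j => Function.update a i y j + ε) ∈ rectSet S := update_shift_mem haS hyS
  have hqR : Function.update a i y ∉ rectSet R := by
    intro hc
    exact hyR (by simpa using hc i)
  have hsp : scalAt χ hp ≠ 0 := scal_at_point χ ha haS hp hpS hsa
  exact not_escape_up χ (update_le_update hxy) hp hqR hpS hqS hsp

lemma cond3_of_witness (χ : intervalModule k (rectSet R) hIc ⟶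
      transl n ε ⋙ intervalModule k (rectSet S) hJc)
    {a : Fin n → ℝ} (ha : a ∈ rectSet R) (haS : (fun i => a i + ε) ∈ rectSet S)
    (hsa : scalAt χ ha ≠ 0) (i : Fin n) :
    ∀ x y : ℝ, x ≤ y → x ∈ R i → y ∈ R i → y + ε ∈ S i → x + ε ∈ S i := by
  intro x y hxy hxR hyR hyS
  by_contra hxS
  have hp : Function.update a i x ∈ rectSet R := update_mem_rect ha hxR
  have hq : Function.update a i y ∈ rectSet R := update_mem_rect ha hyR
  have hqS : (fun j => Function.update a i y j + ε) ∈ rectSet S := update_shift_mem haS hyS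
  have hpS : (fun j => Function.update a i x j + ε) ∉ rectSet S := by
    intro hc
    exact hxS (by simpa using hc i)
  have hsq : scalAt χ hq ≠ 0 := scal_at_point χ ha haS hq hqS hsa
  exact not_escape_down χ (update_le_update hxy) hp hq hpS hqS hsq

end RectAux

namespace RectAux

open CategoryTheory

variable {k : Type} [Field k] {n : ℕ} {ε : ℝ}
  {I J K : Set (Fin n → ℝ)} {hI : IsConvex I} {hJ : IsConvex J} {hK : IsConvex K}

/-- If both scalars are nonzero at a common point, the composite is nonzero. -/
lemma comp_ne_zero (χ : intervalModule k I hI ⟶ transl n ε ⋙ intervalModule k J hJ)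
    (ψ : intervalModule k J hJ ⟶ transl n ε ⋙ intervalModule k K hK)
    {p : Fin n → ℝ} (hp : p ∈ I) (hpJ : (fun i => p i + ε) ∈ J)
    (hsχ : scalAt χ hp ≠ 0) (hsψ : scalAt ψ hpJ ≠ 0) :
    χ ≫ CategoryTheory.Functor.whiskerLeft (transl n ε) ψ ≠ 0 := by
  intro hz
  have happ : (χ ≫ CategoryTheory.Functor.whiskerLeft (transl n ε) ψ).app p = 0 := by
    rw [hz]; rfl
  have hev : ev ((χ ≫ CategoryTheory.Functor.whiskerLeft (transl n ε) ψ).app p (oneEl hp)) = 0 := by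
    rw [happ]; rfl
  have e : (χ ≫ CategoryTheory.Functor.whiskerLeft (transl n ε) ψ).app p (oneEl hp) =
      ψ.app (fun i => p i + ε) (χ.app p (oneEl hp)) := rfl
  erw [e, app_ev ψ hpJ, app_ev χ hp, ev_oneEl, one_mul] at hev
  exact (mul_ne_zero hsχ hsψ) hev

/-- Real-valued endpoints. -/
noncomputable def uL (A : Set ℝ) : ℝ := if BddBelow A then sInf A else 0
noncomputable def uH (A : Set ℝ) : ℝ := if BddAbove A then sSup A else 0

lemma uDec_lowDec {A : Set ℝ} (hne : A.Nonempty) : uDec (lowDec A) = uL A := by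
  have h0 : uDec (lowDec A) = (sInf ((↑) '' A : Set EReal)).toReal := rfl
  rw [h0, uL]
  split_ifs with h
  · rw [sInf_image_of_bddBelow hne h]
    exact EReal.toReal_coe _
  · rw [sInf_image_of_not_bddBelow h]
    rfl

lemma uDec_highDec {A : Set ℝ} (hne : A.Nonempty) : uDec (highDec A) = uH A := by
  have h0 : uDec (highDec A) = (sSup ((↑) '' A : Set EReal)).toReal := rfl
  rw [h0, uH]
  split_ifs with h
  · rw [sSup_image_of_bddAbove hne h]
    exact EReal.toReal_coe _
  · rw [sSup_image_of_not_bddAbove h]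
    rfl

/-- Non-failure coordinate bound. -/
lemma coord_le {A B C : Set ℝ} (hε : 0 ≤ ε)
    (hAne : A.Nonempty) (hBne : B.Nonempty) (hCne : C.Nonempty)
    (fbAB : BddBelow A ↔ BddBelow B) (fbAC : BddBelow A ↔ BddBelow C)
    (faAB : BddAbove A ↔ BddAbove B) (faAC : BddAbove A ↔ BddAbove C)
    {a b : ℝ} (haA : a ∈ A) (haB : a + ε ∈ B) (hbB : b ∈ B) (hbC : b + ε ∈ C)
    (c2AB : ∀ x y : ℝ, x ≤ y → x ∈ A → x + ε ∈ B → y + ε ∈ B → y ∈ A)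
    (c3AB : ∀ x y : ℝ, x ≤ y → x ∈ A → y ∈ A → y + ε ∈ B → x + ε ∈ B)
    (c2BC : ∀ x y : ℝ, x ≤ y → x ∈ B → x + ε ∈ C → y + ε ∈ C → y ∈ B)
    (c3BC : ∀ x y : ℝ, x ≤ y → x ∈ B → y ∈ B → y + ε ∈ C → x + ε ∈ C) :
    uL C + uH C ≤ uL A + uH A + 4 * ε := by
  have h1 : uL C ≤ uL A + 2 * ε := by
    by_cases hbb : BddBelow A
    · have hbbB : BddBelow B := fbAB.mp hbb
      have hbbC : BddBelow C := fbAC.mp hbb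
      have i1 : sInf B ≤ sInf A + ε := inf_le_inf hAne hbbB haA haB c3AB
      have i2 : sInf C ≤ sInf B + ε := inf_le_inf hBne hbbC hbB hbC c3BC
      rw [uL, uL, if_pos hbb, if_pos hbbC]
      linarith
    · rw [uL, uL, if_neg hbb, if_neg (fun hc => hbb (fbAC.mpr hc))]
      linarith
  have h2 : uH C ≤ uH A + 2 * ε := by
    by_cases hba : BddAbove A
    · have hbaB : BddAbove B := faAB.mp hba
      have i1 : sSup B ≤ sSup A + ε := sup_le_sup hBne hba haA haB c2AB
      have i2 : sSup C ≤ sSup B + ε := sup_le_sup hCne hbaB hbB hbC c2BC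
      rw [uH, uH, if_pos hba, if_pos (faAC.mp hba)]
      linarith
    · rw [uH, uH, if_neg hba, if_neg (fun hc => hba (faAC.mpr hc))]
      linarith
  linarith

/-- Failure coordinate: strict bound. -/
lemma coord_strict {A B C : Set ℝ} {δ : ℝ} (hε : 0 ≤ ε) (hδ : 2 * ε ≤ δ)
    (hAne : A.Nonempty) (hCne : C.Nonempty)
    (fbAC : BddBelow A ↔ BddBelow C) (faAC : BddAbove A ↔ BddAbove C)
    {a b : ℝ} (haA : a ∈ A) (haB : a + ε ∈ B) (hbB : b ∈ B) (hbC : b + ε ∈ C)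
    (c3AB : ∀ x y : ℝ, x ≤ y → x ∈ A → y ∈ A → y + ε ∈ B → x + ε ∈ B)
    (fstar : ∀ c ∈ C, ∀ x ∈ A, x + ε ∈ B → c < x + ε + ε)
    (sigA : ∃ r, r ∈ A ∧ r + δ ∈ A) (sigC : ∃ t, t ∈ C ∧ t + δ ∈ C) :
    uL C + uH C < uL A + uH A + 4 * ε - 2 * δ := by
  have hAbb : BddBelow A := fstar_bddBelow hε haA haB c3AB hbC fstar
  have hCba : BddAbove C := ⟨a + ε + ε, fun c hc => le_of_lt (fstar c hc a haA haB)⟩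
  have hCbb : BddBelow C := fbAC.mp hAbb
  have hAba : BddAbove A := faAC.mpr hCba
  have := fstar_strict (A := A) (B := B) (C := C) hε hδ hAne hCne hAbb hAba hCbb hCba
    haA haB c3AB fstar sigA sigC
  rw [uL, uL, uH, uH, if_pos hAbb, if_pos hCbb, if_pos hAba, if_pos hCba]
  linarith

end RectAux

/-- If `R`, `S`, `T` are rectangles of the same type, `R` and `T` are
`(4n−2)ε`-significant, and `α(R) ≤ α(T)`, then for nonzero morphisms `χ : 𝕀^R ⟶ 𝕀^S(ε)`
and `ψ : 𝕀^S ⟶ 𝕀^T(ε)` the composite `ψ(ε) ∘ χ : 𝕀^R ⟶ 𝕀^T(2ε)` is nonzero. -/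
theorem rect_nonzero_composite
    (k : Type) [Field k] {n : ℕ} (ε : ℝ) (hε : 0 ≤ ε) (R S T : Fin n → Set ℝ)
    (hR : IsRectFactors R) (hS : IsRectFactors S) (hT : IsRectFactors T)
    (hRS : SameType R S) (hST : SameType S T) (hRT : SameType R T)
    (hRsig : SetSignificant ((4 * (n : ℝ) - 2) * ε) (rectSet R))
    (hTsig : SetSignificant ((4 * (n : ℝ) - 2) * ε) (rectSet T))
    (hα : alphaR R ≤ alphaR T)
    (χ : intervalModule k (rectSet R) (rectSet_convex R fun i => (hR i).2) ⟶
      transl n ε ⋙ intervalModule k (rectSet S) (rectSet_convex S fun i => (hS i).2))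
    (ψ : intervalModule k (rectSet S) (rectSet_convex S fun i => (hS i).2) ⟶
      transl n ε ⋙ intervalModule k (rectSet T) (rectSet_convex T fun i => (hT i).2))
    (hχ : χ ≠ 0) (hψ : ψ ≠ 0) :
    χ ≫ CategoryTheory.Functor.whiskerLeft (transl n ε) ψ ≠ 0 := by
  classical
  obtain ⟨a, haR, haS, hsa⟩ := RectAux.exists_witness χ hχ
  obtain ⟨b, hbS, hbT, hsb⟩ := RectAux.exists_witness ψ hψ
  have c2RS := fun i => RectAux.cond2_of_witness χ haR haS hsa i
  have c3RS := fun i => RectAux.cond3_of_witness χ haR haS hsa i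
  have c2ST := fun i => RectAux.cond2_of_witness ψ hbS hbT hsb i
  have c3ST := fun i => RectAux.cond3_of_witness ψ hbS hbT hsb i
  by_cases hpt : ∀ i, ∃ x, x ∈ R i ∧ x + ε ∈ S i ∧ x + ε + ε ∈ T i
  · choose x hx1 hx2 hx3 using hpt
    have hpR : x ∈ rectSet R := hx1
    have hpS : (fun i => x i + ε) ∈ rectSet S := fun j => hx2 j
    have hpT : (fun i => (fun j => x j + ε) i + ε) ∈ rectSet T := fun j => hx3 j
    have hsχ := RectAux.scal_at_point χ haR haS hpR hpS hsa
    have hsψ := RectAux.scal_at_point ψ hbS hbT hpS hpT hsb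
    exact RectAux.comp_ne_zero χ ψ hpR hpS hsχ hsψ
  · exfalso
    push_neg at hpt
    obtain ⟨i, hfail⟩ := hpt
    have fstar : ∀ c ∈ T i, ∀ x ∈ R i, x + ε ∈ S i → c < x + ε + ε := by
      rcases RectAux.point_or_fstar (A := R i) (hT i).2 (hbS i) (hbT i) (c3ST i) with h | h
      · exact absurd h (by push_neg; exact fun y h1 h2 => hfail y h1 h2)
      · exact h
    obtain ⟨r, hrR, hrR'⟩ := hRsig
    obtain ⟨t, htT, htT'⟩ := hTsig
    set δ := (4 * (n : ℝ) - 2) * ε with hδdef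
    have sigR : ∀ j, ∃ y, y ∈ R j ∧ y + δ ∈ R j := fun j => ⟨r j, hrR j, hrR' j⟩
    have sigT : ∀ j, ∃ y, y ∈ T j ∧ y + δ ∈ T j := fun j => ⟨t j, htT j, htT' j⟩
    have hn : (1 : ℝ) ≤ (n : ℝ) := by
      have := i.pos
      exact_mod_cast this
    have hδε : 2 * ε ≤ δ := by nlinarith
    have fbRS : ∀ j, BddBelow (R j) ↔ BddBelow (S j) := fun j =>
      RectAux.bddBelow_iff_sameType (hRS j).1 (hRS j).2
    have fbRT : ∀ j, BddBelow (R j) ↔ BddBelow (T j) := fun j =>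
      RectAux.bddBelow_iff_sameType (hRT j).1 (hRT j).2
    have faRS : ∀ j, BddAbove (R j) ↔ BddAbove (S j) := fun j =>
      RectAux.bddAbove_iff_sameType (hRS j).1 (hRS j).2
    have faRT : ∀ j, BddAbove (R j) ↔ BddAbove (T j) := fun j =>
      RectAux.bddAbove_iff_sameType (hRT j).1 (hRT j).2
    have hαR : alphaR R = ∑ j, (RectAux.uL (R j) + RectAux.uH (R j)) := by
      rw [alphaR, ← Finset.sum_add_distrib]
      refine Finset.sum_congr rfl fun j _ => ?_
      rw [show minDec R j = lowDec (R j) from rfl, show maxDec R j = highDec (R j) from rfl,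
        RectAux.uDec_lowDec (hR j).1, RectAux.uDec_highDec (hR j).1]
    have hαT : alphaR T = ∑ j, (RectAux.uL (T j) + RectAux.uH (T j)) := by
      rw [alphaR, ← Finset.sum_add_distrib]
      refine Finset.sum_congr rfl fun j _ => ?_
      rw [show minDec T j = lowDec (T j) from rfl, show maxDec T j = highDec (T j) from rfl,
        RectAux.uDec_lowDec (hT j).1, RectAux.uDec_highDec (hT j).1]
    have key : ∀ j, RectAux.uL (T j) + RectAux.uH (T j) ≤
        RectAux.uL (R j) + RectAux.uH (R j) + 4 * ε - (if j = i then 2 * δ else 0) := by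
      intro j
      by_cases hj : j = i
      · subst hj
        rw [if_pos rfl]
        have := RectAux.coord_strict (B := S j) hε hδε (hR j).1 (hT j).1
          (fbRT j) (faRT j) (haR j) (haS j) (hbS j) (hbT j) (c3RS j) fstar (sigR j) (sigT j)
        linarith
      · rw [if_neg hj]
        have := RectAux.coord_le hε (hR j).1 (hS j).1 (hT j).1
          (fbRS j) (fbRT j) (faRS j) (faRT j) (haR j) (haS j) (hbS j) (hbT j)
          (c2RS j) (c3RS j) (c2ST j) (c3ST j)
        linarith
    have keyi : RectAux.uL (T i) + RectAux.uH (T i) <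
        RectAux.uL (R i) + RectAux.uH (R i) + 4 * ε - (if i = i then 2 * δ else 0) := by
      rw [if_pos rfl]
      have := RectAux.coord_strict (B := S i) hε hδε (hR i).1 (hT i).1
        (fbRT i) (faRT i) (haR i) (haS i) (hbS i) (hbT i) (c3RS i) fstar (sigR i) (sigT i)
      linarith
    have hlt : ∑ j, (RectAux.uL (T j) + RectAux.uH (T j)) <
        ∑ j, (RectAux.uL (R j) + RectAux.uH (R j) + 4 * ε - (if j = i then 2 * δ else 0)) :=
      Finset.sum_lt_sum (fun j _ => key j) ⟨i, Finset.mem_univ i, keyi⟩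
    have hsum : ∑ j, (RectAux.uL (R j) + RectAux.uH (R j) + 4 * ε - (if j = i then 2 * δ else 0)) =
        alphaR R + (n : ℝ) * (4 * ε) - 2 * δ := by
      rw [Finset.sum_sub_distrib, Finset.sum_add_distrib, Finset.sum_const,
        Finset.card_univ, Fintype.card_fin, nsmul_eq_mul, hαR]
      congr 1
      simp
    rw [hsum, ← hαT] at hlt
    have hprod : (n : ℝ) * ε - ε ≥ 0 := by nlinarith
    have hδe : δ = 4 * ((n : ℝ) * ε) - 2 * ε := by rw [hδdef]; ring
    have hne : (n : ℝ) * (4 * ε) = 4 * ((n : ℝ) * ε) := by ring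
    rw [hne] at hlt
    linarith
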